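/- Let d ≥ 2 with d = 2 or d odd. Let Λ ⊆ ℕ^{2d} be the submonoid generated by the 2d vectors β_i = e_{2i−1} + e_{2i} for 1 ≤ i ≤ d and γ_j = e_j + e_{d+j} for 1 ≤ j ≤ d, where e_1, …, e_{2d} is the standard basis of ℕ^{2d}, and order Λ by μ ≤ λ iff λ − μ ∈ Λ. Let 𝟙 = (1,1,…,1) = β_1 + ⋯ + β_d ∈ Λ. Then deg(𝟙) = d, and the open interval (0,𝟙) = {μ ∈ Λ : 0 < μ < 𝟙} is nonempty and disconnected: it equals the disjoint union A ⊔ B, where A is the set of sums of nonempty proper subsets of {β_1,…,β_d} and B is the set of sums of nonempty proper subsets of {γ_1,…,γ_d}, and no element of A is comparable to any element of B. Consequently H̃_0(Δ(0,𝟙); K) ≠ 0 for every field K. -/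

import Mathlib

open scoped Classical

noncomputable section

namespace ASG

variable {e n : ℕ}

/-- Ambient monoid `ℕ^e`. -/
abbrev M (e : ℕ) : Type := Fin e →₀ ℕ

/-- The affine semigroup `Λ` generated by `α 1, …, α n`. -/
def sg (α : Fin n → M e) : AddSubmonoid (M e) :=
  AddSubmonoid.closure (Set.range α)

/-- The partial order on `Λ` : `μ ≤ ν` iff `ν - μ ∈ Λ`. -/
def sgLE (α : Fin n → M e) (μ ν : M e) : Prop := ∃ δ ∈ sg α, μ + δ = ν

/-- Strict version of the order on `Λ`. -/
def sgLT (α : Fin n → M e) (μ ν : M e) : Prop := sgLE α μ ν ∧ μ ≠ ν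

/-- `deg λ` : the least `r` such that `λ` is a sum of `r` generators. -/
def deg (α : Fin n → M e) (l : M e) : ℕ :=
  sInf {r : ℕ | ∃ w : Fin r → Fin n, l = ∑ t, α (w t)}

/-- Comparability in the poset `Λ`. -/
def cmp2 (α : Fin n → M e) (a b : M e) : Prop := sgLE α a b ∨ sgLE α b a

/-- Faces of the order complex `Δ(x,y)` of the open interval `(x,y)` in `Λ`:
finite chains of elements strictly between `x` and `y`. -/
def IsOFace (α : Fin n → M e) (x y : M e) (S : Finset (M e)) : Prop :=
  (∀ μ ∈ S, μ ∈ sg α ∧ sgLT α x μ ∧ sgLT α μ y) ∧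
    (S : Set (M e)).Pairwise (cmp2 α)

/-- Faces with `m` vertices (i.e. of dimension `m - 1`). -/
def OFace (α : Fin n → M e) (x y : M e) (m : ℕ) : Type :=
  { S : Finset (M e) // IsOFace α x y S ∧ S.card = m }

/-- The simplicial chain group with coefficients in `K` spanned by the faces
with `m` vertices (the augmented/reduced chain complex: for `m = 0` this is a
copy of `K` spanned by the empty face). -/
abbrev OC (K : Type) [Field K] (α : Fin n → M e) (x y : M e) (m : ℕ) : Type :=
  OFace α x y m →₀ K

/-- Deleting a vertex from a face. -/
def erasedOFace {α : Fin n → M e} {x y : M e} {m : ℕ} (S : OFace α x y m)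
    (v : M e) (hv : v ∈ S.1) : OFace α x y (m - 1) :=
  ⟨S.1.erase v,
    ⟨fun μ hμ => S.2.1.1 μ (Finset.mem_of_mem_erase hμ),
      S.2.1.2.mono (Finset.coe_subset.mpr (Finset.erase_subset _ _))⟩,
    by rw [Finset.card_erase_of_mem hv, S.2.2]⟩

/-- The simplicial boundary map of the (augmented) chain complex of `Δ(x,y)`;
the sign of the deletion of a vertex `v` is `(-1)^(number of vertices below v)`. -/
def obd (K : Type) [Field K] (α : Fin n → M e) (x y : M e) (m : ℕ) :
    OC K α x y m →ₗ[K] OC K α x y (m - 1) :=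
  Finsupp.linearCombination K fun S : OFace α x y m =>
    ∑ v ∈ S.1.attach,
      ((-1 : K) ^ (S.1.filter fun w => sgLT α w v.1).card) •
        Finsupp.single (erasedOFace S v.1 v.2) 1

/-- Vanishing of the reduced simplicial homology `H̃_i(Δ(x,y); K)`, for `i : ℤ`:
every reduced `i`-cycle is a boundary.  (An `i`-dimensional face has `i + 1`
vertices; for `i ≤ -2` the statement is vacuous, as is the reduced homology.) -/
def HredVanishes (K : Type) [Field K] (α : Fin n → M e) (x y : M e) (i : ℤ) : Prop :=
  ∀ m : ℕ, (m : ℤ) = i + 1 →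
    ∀ c : OC K α x y m, obd K α x y m c = 0 →
      ∃ b : OC K α x y (m + 1), obd K α x y (m + 1) b = c

/-- The reduced simplicial homology group `H̃_(m-1)(Δ(x,y); K)` :
cycles in the chain group spanned by faces with `m` vertices modulo boundaries,
realized as the image of the cycles in the cokernel of the boundary map. -/
abbrev HredMod (K : Type) [Field K] (α : Fin n → M e) (x y : M e) (m : ℕ) : Type :=
  ↥(Submodule.map (Submodule.mkQ (LinearMap.range (obd K α x y (m + 1))))
      (LinearMap.ker (obd K α x y m)))

end ASG
namespace ASG

/-- The generator `β_i = e_(2i-1) + e_(2i)` (1-indexed), for `i ∈ Fin d`. -/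
def bgen (d : ℕ) (i : Fin d) : M (2 * d) :=
  Finsupp.single ⟨2 * i.1, by have := i.isLt; omega⟩ 1 +
    Finsupp.single ⟨2 * i.1 + 1, by have := i.isLt; omega⟩ 1

/-- The generator `γ_j = e_j + e_(d+j)` (1-indexed), for `j ∈ Fin d`. -/
def ggen (d : ℕ) (j : Fin d) : M (2 * d) :=
  Finsupp.single ⟨j.1, by have := j.isLt; omega⟩ 1 +
    Finsupp.single ⟨d + j.1, by have := j.isLt; omega⟩ 1

/-- The `2d` generators `β_1, …, β_d, γ_1, …, γ_d` of `Λ ⊆ ℕ^(2d)`. -/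
def bggen (d : ℕ) : Fin (2 * d) → M (2 * d) := fun i =>
  if h : i.1 < d then bgen d ⟨i.1, h⟩ else ggen d ⟨i.1 - d, by have := i.isLt; omega⟩

/-- The all-ones vector `𝟙 = (1, 1, …, 1) ∈ ℕ^(2d)`. -/
def allOne (d : ℕ) : M (2 * d) := ∑ j : Fin (2 * d), Finsupp.single j 1

/-- `A`: sums of nonempty proper subsets of `{β_1, …, β_d}`. -/
def setA (d : ℕ) : Set (M (2 * d)) :=
  {μ | ∃ s : Finset (Fin d), s.Nonempty ∧ s ≠ Finset.univ ∧ μ = ∑ i ∈ s, bgen d i}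

/-- `B`: sums of nonempty proper subsets of `{γ_1, …, γ_d}`. -/
def setB (d : ℕ) : Set (M (2 * d)) :=
  {μ | ∃ s : Finset (Fin d), s.Nonempty ∧ s ≠ Finset.univ ∧ μ = ∑ j ∈ s, ggen d j}

end ASG

namespace ASG

lemma bgen_apply (d : ℕ) (i : Fin d) (k : Fin (2*d)) :
    bgen d i k = if k.1 / 2 = i.1 then 1 else 0 := by
  have hi := i.isLt; have hk := k.isLt
  rw [bgen, Finsupp.add_apply, Finsupp.single_apply, Finsupp.single_apply]
  simp only [Fin.ext_iff, Fin.val_mk]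
  split_ifs <;> omega

lemma mod2d (d k : ℕ) (hk : k < 2*d) :
    (k < d ∧ k % d = k) ∨ (d ≤ k ∧ k % d = k - d) := by
  rcases Nat.lt_or_ge k d with h|h
  · exact Or.inl ⟨h, Nat.mod_eq_of_lt h⟩
  · exact Or.inr ⟨h, by rw [Nat.mod_eq_sub_mod h, Nat.mod_eq_of_lt (by omega)]⟩

lemma ggen_apply (d : ℕ) (j : Fin d) (k : Fin (2*d)) :
    ggen d j k = if k.1 % d = j.1 then 1 else 0 := by
  have hj := j.isLt; have hk := k.isLt
  rw [ggen, Finsupp.add_apply, Finsupp.single_apply, Finsupp.single_apply]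
  have hm := mod2d d k.1 k.isLt
  simp only [Fin.ext_iff, Fin.val_mk]
  split_ifs <;> omega

lemma sumB_apply (d : ℕ) (a : Fin d → ℕ) (k : Fin (2*d)) (h : k.1 / 2 < d) :
    (∑ i, a i • bgen d i) k = a ⟨k.1 / 2, h⟩ := by
  rw [Finsupp.finset_sum_apply]
  rw [Finset.sum_eq_single_of_mem (⟨k.1/2, h⟩ : Fin d) (Finset.mem_univ _)]
  · simp [bgen_apply]
  · intro i _ hi
    simp only [Finsupp.smul_apply, bgen_apply]
    rw [if_neg (fun he => hi (Fin.ext he.symm))]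
    simp

lemma sumG_apply (d : ℕ) (b : Fin d → ℕ) (k : Fin (2*d)) (h : k.1 % d < d) :
    (∑ j, b j • ggen d j) k = b ⟨k.1 % d, h⟩ := by
  rw [Finsupp.finset_sum_apply]
  rw [Finset.sum_eq_single_of_mem (⟨k.1 % d, h⟩ : Fin d) (Finset.mem_univ _)]
  · simp [ggen_apply]
  · intro i _ hi
    simp only [Finsupp.smul_apply, ggen_apply]
    rw [if_neg (fun he => hi (Fin.ext he.symm))]
    simp

lemma allOne_apply (d : ℕ) (k : Fin (2*d)) : allOne d k = 1 := by
  rw [allOne, Finsupp.finset_sum_apply]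
  rw [Finset.sum_eq_single_of_mem k (Finset.mem_univ _)]
  · simp
  · intro i _ hi; exact Finsupp.single_eq_of_ne hi.symm

end ASG
namespace ASG

lemma bgen_mem (d : ℕ) (i : Fin d) : bgen d i ∈ sg (bggen d) := by
  apply AddSubmonoid.subset_closure
  refine ⟨⟨i.1, by have := i.isLt; omega⟩, ?_⟩
  rw [bggen]
  rw [dif_pos (show (⟨i.1, by have := i.isLt; omega⟩ : Fin (2*d)).1 < d from i.isLt)]

lemma ggen_mem (d : ℕ) (hd : 0 < d) (j : Fin d) : ggen d j ∈ sg (bggen d) := by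
  apply AddSubmonoid.subset_closure
  refine ⟨⟨d + j.1, by have := j.isLt; omega⟩, ?_⟩
  rw [bggen, dif_neg (by simp)]
  congr 1
  exact Fin.ext (by simp)

lemma sum_subsetB_apply (d : ℕ) (s : Finset (Fin d)) (k : Fin (2*d)) (h : k.1/2 < d) :
    (∑ i ∈ s, bgen d i) k = if (⟨k.1/2, h⟩ : Fin d) ∈ s then 1 else 0 := by
  rw [Finsupp.finset_sum_apply]
  rw [show (∑ i ∈ s, bgen d i k) = ∑ i ∈ s, if (⟨k.1/2, h⟩ : Fin d) = i then 1 else 0 from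
    Finset.sum_congr rfl (fun i _ => by rw [bgen_apply]; congr 1; rw [Fin.ext_iff])]
  rw [Finset.sum_ite_eq]

lemma sum_subsetG_apply (d : ℕ) (s : Finset (Fin d)) (k : Fin (2*d)) (h : k.1 % d < d) :
    (∑ j ∈ s, ggen d j) k = if (⟨k.1 % d, h⟩ : Fin d) ∈ s then 1 else 0 := by
  rw [Finsupp.finset_sum_apply]
  rw [show (∑ j ∈ s, ggen d j k) = ∑ j ∈ s, if (⟨k.1 % d, h⟩ : Fin d) = j then 1 else 0 from
    Finset.sum_congr rfl (fun j _ => by rw [ggen_apply]; congr 1; rw [Fin.ext_iff])]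
  rw [Finset.sum_ite_eq]

lemma mem_sg_repr (d : ℕ) (μ : M (2*d)) (hμ : μ ∈ sg (bggen d)) :
    ∃ a b : Fin d → ℕ, μ = ∑ i, a i • bgen d i + ∑ j, b j • ggen d j := by
  have key : ∀ (i₀ : Fin d) (f : Fin d → M (2*d)),
      f i₀ = ∑ i, (if i = i₀ then 1 else 0 : ℕ) • f i := by
    intro i₀ f
    rw [Finset.sum_eq_single_of_mem i₀ (Finset.mem_univ _)]
    · simp
    · intro i _ hi; simp [hi]
  refine AddSubmonoid.closure_induction ?_ ?_ ?_ hμ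
  · rintro x ⟨t, rfl⟩
    rw [bggen]
    split_ifs with h
    · exact ⟨fun i => if i = ⟨t.1, h⟩ then 1 else 0, 0, by
        rw [← key ⟨t.1, h⟩ (bgen d)]; simp⟩
    · exact ⟨0, fun j => if j = ⟨t.1 - d, by have := t.isLt; omega⟩ then 1 else 0, by
        rw [← key _ (ggen d)]; simp⟩
  · exact ⟨0, 0, by simp⟩
  · rintro x y _ _ ⟨a, b, rfl⟩ ⟨a', b', rfl⟩
    refine ⟨a + a', b + b', ?_⟩
    simp only [Pi.add_apply, add_smul, Finset.sum_add_distrib]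
    abel

lemma sum_repr_coord (d : ℕ) (hd : 0 < d) (a b : Fin d → ℕ) (k : Fin (2*d)) :
    (∑ i, a i • bgen d i + ∑ j, b j • ggen d j) k
      = a ⟨k.1/2, by have := k.isLt; omega⟩ + b ⟨k.1 % d, Nat.mod_lt _ hd⟩ := by
  rw [Finsupp.add_apply, sumB_apply d a k (by have := k.isLt; omega),
    sumG_apply d b k (Nat.mod_lt _ hd)]

end ASG
namespace ASG

/-- Connectivity of the zig-zag relation: `A` is constant. -/
lemma const_of_rel (d : ℕ) (hd : 2 ≤ d) (hdo : d = 2 ∨ Odd d) (A : ℕ → ℕ)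
    (h : ∀ j, j < d → A (j / 2) = A ((d + j) / 2)) :
    ∀ i, i < d → A i = A 0 := by
  rcases hdo with rfl | ⟨m, rfl⟩
  · intro i hi
    have h0 := h 0 (by omega)
    have e1 : (0:ℕ)/2 = 0 := by omega
    have e2 : (2+0)/2 = 1 := by omega
    rw [e1, e2] at h0
    interval_cases i
    · rfl
    · exact h0.symm
  · have hm : 1 ≤ m := by omega
    have h1 : ∀ t, t ≤ m → A t = A (m + t) := by
      intro t ht
      have := h (2*t) (by omega)
      have e1 : 2*t/2 = t := by omega
      have e2 : (2*m+1+2*t)/2 = m + t := by omega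
      rwa [e1, e2] at this
    have h2 : ∀ t, t < m → A t = A (m + t + 1) := by
      intro t ht
      have := h (2*t+1) (by omega)
      have e1 : (2*t+1)/2 = t := by omega
      have e2 : (2*m+1+(2*t+1))/2 = m + t + 1 := by omega
      rwa [e1, e2] at this
    have h3 : ∀ t, t ≤ m → A (m + t) = A m := by
      intro t
      induction t with
      | zero => intro _; rfl
      | succ t ih =>
        intro ht
        have e : m + (t+1) = m + t + 1 := by omega
        rw [e, ← h2 t (by omega), h1 t (by omega)]
        exact ih (by omega)
    have h0 : A 0 = A m := h1 0 (by omega)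
    intro i hi
    rcases Nat.lt_or_ge i (m+1) with h'|h'
    · rw [h1 i (by omega), h3 i (by omega), h0]
    · have : i = m + (i - m) := by omega
      rw [this, h3 (i-m) (by omega), h0]

lemma allOne_eq_sumB (d : ℕ) (hd : 0 < d) : allOne d = ∑ i : Fin d, bgen d i := by
  ext k
  rw [allOne_apply, show (∑ i : Fin d, bgen d i) = ∑ i ∈ Finset.univ, bgen d i from rfl,
    sum_subsetB_apply d Finset.univ k (by have := k.isLt; omega)]
  simp

lemma allOne_eq_sumG (d : ℕ) (hd : 0 < d) : allOne d = ∑ j : Fin d, ggen d j := by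
  ext k
  rw [allOne_apply, show (∑ j : Fin d, ggen d j) = ∑ j ∈ Finset.univ, ggen d j from rfl,
    sum_subsetG_apply d Finset.univ k (Nat.mod_lt _ hd)]
  simp

lemma allOne_mem (d : ℕ) (hd : 0 < d) : allOne d ∈ sg (bggen d) := by
  rw [allOne_eq_sumB d hd]
  exact _root_.sum_mem (fun i _ => bgen_mem d i)

/-- total weight -/
def wt {e : ℕ} (μ : M e) : ℕ := ∑ k, μ k

lemma wt_add {e : ℕ} (μ ν : M e) : wt (μ + ν) = wt μ + wt ν := by
  simp [wt, Finset.sum_add_distrib]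

lemma wt_single {e : ℕ} (x : Fin e) : wt (Finsupp.single x 1) = 1 := by
  rw [wt, Finset.sum_eq_single_of_mem x (Finset.mem_univ _)]
  · simp
  · intro i _ hi; exact Finsupp.single_eq_of_ne hi

lemma wt_bggen (d : ℕ) (t : Fin (2*d)) : wt (bggen d t) = 2 := by
  rw [bggen]
  split_ifs with h
  · rw [bgen, wt_add, wt_single, wt_single]
  · rw [ggen, wt_add, wt_single, wt_single]

lemma wt_allOne (d : ℕ) : wt (allOne d) = 2*d := by
  rw [allOne, wt]
  rw [show (∑ k : Fin (2*d), (∑ j : Fin (2*d), Finsupp.single j 1) k)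
      = ∑ k : Fin (2*d), 1 from Finset.sum_congr rfl (fun k _ => allOne_apply d k)]
  simp [mul_comm]

lemma wt_sum {e n : ℕ} (f : Fin n → M e) : wt (∑ t, f t) = ∑ t, wt (f t) := by
  induction n with
  | zero => simp [wt]
  | succ n ih =>
    rw [Fin.sum_univ_succ, wt_add, ih, Fin.sum_univ_succ]

lemma deg_allOne (d : ℕ) (hd : 0 < d) : deg (bggen d) (allOne d) = d := by
  have hmem : ∃ w : Fin d → Fin (2*d), allOne d = ∑ t, bggen d (w t) := by
    refine ⟨fun i => ⟨i.1, by have := i.isLt; omega⟩, ?_⟩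
    rw [allOne_eq_sumB d hd]
    refine Finset.sum_congr rfl (fun i _ => ?_)
    rw [bggen, dif_pos (show i.1 < d from i.isLt)]
  have hset : {r : ℕ | ∃ w : Fin r → Fin (2*d), allOne d = ∑ t, bggen d (w t)} = {d} := by
    ext r
    simp only [Set.mem_setOf_eq, Set.mem_singleton_iff]
    constructor
    · rintro ⟨w, hw⟩
      have := congrArg wt hw
      rw [wt_allOne, wt_sum] at this
      rw [show (∑ t : Fin r, wt (bggen d (w t))) = ∑ t : Fin r, 2 from
        Finset.sum_congr rfl (fun t _ => wt_bggen d (w t))] at this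
      simp at this
      omega
    · intro hr; rw [hr]; exact hmem
  rw [deg, hset, csInf_singleton]

end ASG
namespace ASG

/-- extension of coefficients to ℕ -/
def extc (d : ℕ) (a : Fin d → ℕ) : ℕ → ℕ := fun m => if h : m < d then a ⟨m, h⟩ else 0

lemma repr_apply (d : ℕ) (hd : 0 < d) (a b : Fin d → ℕ) (k : Fin (2*d)) :
    (∑ i, a i • bgen d i + ∑ j, b j • ggen d j) k
      = extc d a (k.1/2) + extc d b (k.1 % d) := by
  rw [sum_repr_coord d hd a b k, extc, extc,
    dif_pos (show k.1/2 < d by have := k.isLt; omega), dif_pos (Nat.mod_lt _ hd)]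

/-- indicator of a subset, extended to ℕ -/
def chi (d : ℕ) (s : Finset (Fin d)) : ℕ → ℕ :=
  fun m => if h : m < d then (if ⟨m, h⟩ ∈ s then 1 else 0) else 0

lemma chi_le_one (d : ℕ) (s : Finset (Fin d)) (m : ℕ) : chi d s m ≤ 1 := by
  rw [chi]; split_ifs <;> omega

lemma sum_subsetB_coord (d : ℕ) (s : Finset (Fin d)) (k : Fin (2*d)) :
    (∑ i ∈ s, bgen d i) k = chi d s (k.1/2) := by
  have h : k.1/2 < d := by have := k.isLt; omega
  rw [sum_subsetB_apply d s k h, chi, dif_pos h]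

lemma sum_subsetG_coord (d : ℕ) (hd : 0 < d) (s : Finset (Fin d)) (k : Fin (2*d)) :
    (∑ j ∈ s, ggen d j) k = chi d s (k.1 % d) := by
  have h : k.1 % d < d := Nat.mod_lt _ hd
  rw [sum_subsetG_apply d s k h, chi, dif_pos h]

/-- The master cancellation lemma. -/
lemma key_const (d : ℕ) (hd : 2 ≤ d) (hdo : d = 2 ∨ Odd d) (F G : ℕ → ℕ)
    (h : ∀ k : Fin (2*d), F (k.1/2) + G (k.1 % d) = 1) :
    ∀ i, i < d → F i = F 0 := by
  apply const_of_rel d hd hdo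
  intro j hj
  have h1 := h ⟨j, by omega⟩
  have h2 := h ⟨d + j, by omega⟩
  simp only [Fin.val_mk] at h1 h2
  rw [Nat.mod_eq_of_lt hj] at h1
  rw [Nat.add_mod_left, Nat.mod_eq_of_lt hj] at h2
  omega

lemma setA_subset_interval (d : ℕ) (hd : 2 ≤ d) :
    ∀ μ ∈ setA d, μ ∈ sg (bggen d) ∧ sgLT (bggen d) 0 μ ∧ sgLT (bggen d) μ (allOne d) := by
  rintro μ ⟨s, hne, hproper, rfl⟩
  have hd0 : 0 < d := by omega
  have hmem : (∑ i ∈ s, bgen d i) ∈ sg (bggen d) :=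
    _root_.sum_mem (fun i _ => bgen_mem d i)
  obtain ⟨i₀, hi₀⟩ := hne
  obtain ⟨i₁, hi₁⟩ : ∃ i, i ∉ s := by
    by_contra hc; push_neg at hc; exact hproper (Finset.eq_univ_iff_forall.mpr hc)
  have coord : ∀ i : Fin d, (∑ i' ∈ s, bgen d i') ⟨2*i.1, by have := i.isLt; omega⟩
      = if i ∈ s then 1 else 0 := by
    intro i
    rw [sum_subsetB_coord, chi]
    have e : (2*i.1)/2 = i.1 := by omega
    simp only [Fin.val_mk, e, dif_pos i.isLt, Fin.eta]
  refine ⟨hmem, ⟨⟨_, hmem, zero_add _⟩, ?_⟩, ⟨⟨∑ i ∈ sᶜ, bgen d i,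
    _root_.sum_mem (fun i _ => bgen_mem d i), ?_⟩, ?_⟩⟩
  · intro h0
    have := coord i₀
    rw [← h0] at this
    simp [hi₀] at this
  · rw [Finset.sum_add_sum_compl s (bgen d), ← allOne_eq_sumB d hd0]
  · intro h1
    have := coord i₁
    rw [h1, allOne_apply] at this
    simp [hi₁] at this

lemma setB_subset_interval (d : ℕ) (hd : 2 ≤ d) :
    ∀ μ ∈ setB d, μ ∈ sg (bggen d) ∧ sgLT (bggen d) 0 μ ∧ sgLT (bggen d) μ (allOne d) := by
  rintro μ ⟨s, hne, hproper, rfl⟩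
  have hd0 : 0 < d := by omega
  have hmem : (∑ j ∈ s, ggen d j) ∈ sg (bggen d) :=
    _root_.sum_mem (fun j _ => ggen_mem d hd0 j)
  obtain ⟨j₀, hj₀⟩ := hne
  obtain ⟨j₁, hj₁⟩ : ∃ j, j ∉ s := by
    by_contra hc; push_neg at hc; exact hproper (Finset.eq_univ_iff_forall.mpr hc)
  have coord : ∀ j : Fin d, (∑ j' ∈ s, ggen d j') ⟨j.1, by have := j.isLt; omega⟩
      = if j ∈ s then 1 else 0 := by
    intro j
    rw [sum_subsetG_coord d hd0, chi]
    have e : j.1 % d = j.1 := Nat.mod_eq_of_lt j.isLt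
    simp only [Fin.val_mk, e, dif_pos j.isLt, Fin.eta]
  refine ⟨hmem, ⟨⟨_, hmem, zero_add _⟩, ?_⟩, ⟨⟨∑ j ∈ sᶜ, ggen d j,
    _root_.sum_mem (fun j _ => ggen_mem d hd0 j), ?_⟩, ?_⟩⟩
  · intro h0
    have := coord j₀
    rw [← h0] at this
    simp [hj₀] at this
  · rw [Finset.sum_add_sum_compl s (ggen d), ← allOne_eq_sumG d hd0]
  · intro h1
    have := coord j₁
    rw [h1, allOne_apply] at this
    simp [hj₁] at this

end ASG
namespace ASG

lemma chi_fin (d : ℕ) (s : Finset (Fin d)) (i : Fin d) :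
    chi d s i.1 = if i ∈ s then 1 else 0 := by
  rw [chi, dif_pos i.isLt]

lemma extc_fin (d : ℕ) (a : Fin d → ℕ) (i : Fin d) : extc d a i.1 = a i := by
  rw [extc, dif_pos i.isLt]

lemma interval_subset (d : ℕ) (hd : 2 ≤ d) (hdo : d = 2 ∨ Odd d) :
    ∀ μ : M (2*d), μ ∈ sg (bggen d) → sgLT (bggen d) 0 μ → sgLT (bggen d) μ (allOne d) →
      μ ∈ setA d ∪ setB d := by
  rintro μ hμ ⟨_, hne0⟩ ⟨⟨δ, hδ, hsum⟩, hne1⟩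
  have hd0 : 0 < d := by omega
  obtain ⟨a, b, hμr⟩ := mem_sg_repr d μ hμ
  obtain ⟨a', b', hδr⟩ := mem_sg_repr d δ hδ
  have hco : ∀ k : Fin (2*d),
      (extc d a (k.1/2) + extc d a' (k.1/2)) + (extc d b (k.1 % d) + extc d b' (k.1 % d))
        = 1 := by
    intro k
    have h := DFunLike.congr_fun hsum k
    rw [hμr, hδr, Finsupp.add_apply, repr_apply d hd0 a b k, repr_apply d hd0 a' b' k,
      allOne_apply] at h
    omega
  have hF := key_const d hd hdo (fun m => extc d a m + extc d a' m)
    (fun m => extc d b m + extc d b' m) (fun k => hco k)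
  have h00 := hco ⟨0, by omega⟩
  simp only [Fin.val_mk, Nat.zero_div, Nat.zero_mod] at h00
  rcases Nat.lt_or_ge (extc d a 0 + extc d a' 0) 1 with hc | hc
  · -- a part vanishes; μ is a γ-sum
    have hF0 : ∀ i, i < d → extc d a i = 0 ∧ extc d a' i = 0 := by
      intro i hi
      have h5 : extc d a i + extc d a' i = extc d a 0 + extc d a' 0 := hF i hi
      omega
    have hG1 : ∀ j, j < d → extc d b j + extc d b' j = 1 := by
      intro j hj
      have := hco ⟨j, by omega⟩
      simp only [Fin.val_mk] at this
      rw [Nat.mod_eq_of_lt hj] at this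
      have := hF0 (j/2) (by omega)
      omega
    set t : Finset (Fin d) := Finset.univ.filter (fun j => b j = 1) with ht
    have hμt : μ = ∑ j ∈ t, ggen d j := by
      ext k
      rw [hμr, repr_apply d hd0 a b k, sum_subsetG_coord d hd0 t k]
      have hk2 : k.1/2 < d := by have := k.isLt; omega
      have hkm : k.1 % d < d := Nat.mod_lt _ hd0
      have h1 := (hF0 _ hk2).1
      have h2 := hG1 _ hkm
      rw [h1, zero_add, chi, dif_pos hkm, extc, dif_pos hkm]
      rw [ht]
      simp only [Finset.mem_filter, Finset.mem_univ, true_and]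
      have hb := extc_fin d b ⟨k.1 % d, hkm⟩
      rw [extc, dif_pos hkm] at hb
      split_ifs with hbb
      · rw [hbb]
      · have : extc d b (k.1 % d) ≤ 1 := by
          have := extc_fin d b' ⟨k.1 % d, hkm⟩
          rw [extc, dif_pos hkm] at *
          omega
        rw [extc, dif_pos hkm] at this
        omega
    right
    refine ⟨t, ?_, ?_, hμt⟩
    · rw [Finset.nonempty_iff_ne_empty]
      intro h0
      rw [h0, Finset.sum_empty] at hμt
      exact hne0 hμt.symm
    · intro huniv
      rw [huniv, ← allOne_eq_sumG d hd0] at hμt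
      exact hne1 hμt
  · -- b part vanishes; μ is a β-sum
    have hF1 : ∀ i, i < d → extc d a i + extc d a' i = 1 := by
      intro i hi
      have h5 : extc d a i + extc d a' i = extc d a 0 + extc d a' 0 := hF i hi
      omega
    have hG0 : ∀ j, j < d → extc d b j = 0 ∧ extc d b' j = 0 := by
      intro j hj
      have := hco ⟨j, by omega⟩
      simp only [Fin.val_mk] at this
      rw [Nat.mod_eq_of_lt hj] at this
      have := hF1 (j/2) (by omega)
      omega
    set s : Finset (Fin d) := Finset.univ.filter (fun i => a i = 1) with hs
    have hμs : μ = ∑ i ∈ s, bgen d i := by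
      ext k
      rw [hμr, repr_apply d hd0 a b k, sum_subsetB_coord d s k]
      have hk2 : k.1/2 < d := by have := k.isLt; omega
      have hkm : k.1 % d < d := Nat.mod_lt _ hd0
      have h1 := (hG0 _ hkm).1
      have h2 := hF1 _ hk2
      rw [h1, add_zero, chi, dif_pos hk2, extc, dif_pos hk2]
      rw [hs]
      simp only [Finset.mem_filter, Finset.mem_univ, true_and]
      split_ifs with hbb
      · rw [hbb]
      · rw [extc, dif_pos hk2, extc, dif_pos hk2] at h2
        omega
    left
    refine ⟨s, ?_, ?_, hμs⟩
    · rw [Finset.nonempty_iff_ne_empty]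
      intro h0
      rw [h0, Finset.sum_empty] at hμs
      exact hne0 hμs.symm
    · intro huniv
      rw [huniv, ← allOne_eq_sumB d hd0] at hμs
      exact hne1 hμs

lemma disjointAB (d : ℕ) (hd : 2 ≤ d) (hdo : d = 2 ∨ Odd d) :
    setA d ∩ setB d = ∅ := by
  rw [Set.eq_empty_iff_forall_notMem]
  rintro μ ⟨⟨s, ⟨i₀, hi₀⟩, hs2, rfl⟩, ⟨t, ht1, ht2, heq⟩⟩
  have hd0 : 0 < d := by omega
  obtain ⟨i₁, hi₁⟩ : ∃ i, i ∉ s := by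
    by_contra hc; push_neg at hc; exact hs2 (Finset.eq_univ_iff_forall.mpr hc)
  have hco : ∀ k : Fin (2*d), chi d s (k.1/2) + (1 - chi d t (k.1 % d)) = 1 := by
    intro k
    have h := DFunLike.congr_fun heq k
    rw [sum_subsetB_coord d s k, sum_subsetG_coord d hd0 t k] at h
    have := chi_le_one d t (k.1 % d)
    omega
  have hF := key_const d hd hdo (chi d s) (fun m => 1 - chi d t m) hco
  have e0 := hF i₀.1 i₀.isLt
  have e1 := hF i₁.1 i₁.isLt
  rw [chi_fin, if_pos hi₀] at e0
  rw [chi_fin, if_neg hi₁] at e1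
  omega

lemma incomparable (d : ℕ) (hd : 2 ≤ d) (hdo : d = 2 ∨ Odd d) :
    ∀ a ∈ setA d, ∀ b ∈ setB d,
      ¬ sgLE (bggen d) a b ∧ ¬ sgLE (bggen d) b a := by
  rintro μ ⟨s, ⟨i₀, hi₀⟩, hs2, rfl⟩ ν ⟨t, ⟨j₀, hj₀⟩, ht2, rfl⟩
  have hd0 : 0 < d := by omega
  obtain ⟨i₁, hi₁⟩ : ∃ i, i ∉ s := by
    by_contra hc; push_neg at hc; exact hs2 (Finset.eq_univ_iff_forall.mpr hc)
  obtain ⟨j₁, hj₁⟩ : ∃ j, j ∉ t := by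
    by_contra hc; push_neg at hc; exact ht2 (Finset.eq_univ_iff_forall.mpr hc)
  constructor
  · rintro ⟨δ, hδ, heq⟩
    obtain ⟨c, e, rfl⟩ := mem_sg_repr d δ hδ
    have hco : ∀ k : Fin (2*d),
        (chi d s (k.1/2) + extc d c (k.1/2))
          + (1 - chi d t (k.1 % d) + extc d e (k.1 % d)) = 1 := by
      intro k
      have h := DFunLike.congr_fun heq k
      rw [Finsupp.add_apply, sum_subsetB_coord d s k, sum_subsetG_coord d hd0 t k,
        repr_apply d hd0 c e k] at h
      have := chi_le_one d t (k.1 % d)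
      omega
    have hF := key_const d hd hdo (fun m => chi d s m + extc d c m)
      (fun m => 1 - chi d t m + extc d e m) hco
    -- F i₀ ≥ 1, so F ≡ ≥ 1; evaluate at j₁
    have e0 : chi d s i₀.1 + extc d c i₀.1 = chi d s 0 + extc d c 0 := hF i₀.1 i₀.isLt
    rw [chi_fin, if_pos hi₀] at e0
    have hcoj := hco ⟨j₁.1, by have := j₁.isLt; omega⟩
    simp only [Fin.val_mk] at hcoj
    rw [Nat.mod_eq_of_lt j₁.isLt] at hcoj
    have eF : chi d s (j₁.1/2) + extc d c (j₁.1/2) = chi d s 0 + extc d c 0 :=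
      hF (j₁.1/2) (by have := j₁.isLt; omega)
    rw [chi_fin d t j₁, if_neg hj₁] at hcoj
    omega
  · rintro ⟨δ, hδ, heq⟩
    obtain ⟨c, e, rfl⟩ := mem_sg_repr d δ hδ
    have hco : ∀ k : Fin (2*d),
        (1 - chi d s (k.1/2) + extc d c (k.1/2))
          + (chi d t (k.1 % d) + extc d e (k.1 % d)) = 1 := by
      intro k
      have h := DFunLike.congr_fun heq k
      rw [Finsupp.add_apply, sum_subsetB_coord d s k, sum_subsetG_coord d hd0 t k,
        repr_apply d hd0 c e k] at h
      have := chi_le_one d s (k.1/2)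
      omega
    have hF := key_const d hd hdo (fun m => 1 - chi d s m + extc d c m)
      (fun m => chi d t m + extc d e m) hco
    have hcoj := hco ⟨j₀.1, by have := j₀.isLt; omega⟩
    simp only [Fin.val_mk] at hcoj
    rw [Nat.mod_eq_of_lt j₀.isLt] at hcoj
    rw [chi_fin d t j₀, if_pos hj₀] at hcoj
    have eF0 : 1 - chi d s (j₀.1/2) + extc d c (j₀.1/2) = 1 - chi d s 0 + extc d c 0 :=
      hF (j₀.1/2) (by have := j₀.isLt; omega)
    have eF1 : 1 - chi d s i₁.1 + extc d c i₁.1 = 1 - chi d s 0 + extc d c 0 := hF i₁.1 i₁.isLt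
    have hle0 : chi d s 0 ≤ 1 := chi_le_one d s 0
    have hleq : chi d s (j₀.1/2) ≤ 1 := chi_le_one d s _
    rw [chi_fin, if_neg hi₁] at eF1
    omega

end ASG
namespace ASG

lemma sgLE_antisymm {e n : ℕ} (α : Fin n → M e) {u v : M e}
    (h1 : sgLE α u v) (h2 : sgLE α v u) : u = v := by
  obtain ⟨p, _, hp⟩ := h1
  obtain ⟨q, _, hq⟩ := h2
  have h3 : u + (p + q) = u + 0 := by rw [← add_assoc, hp, hq, add_zero]
  have h4 : p + q = 0 := add_left_cancel h3
  have h5 : p = 0 := by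
    ext k
    have := DFunLike.congr_fun h4 k
    rw [Finsupp.add_apply] at this
    simp at this ⊢
    omega
  rw [← hp, h5, add_zero]

lemma sgLT_irrefl {e n : ℕ} (α : Fin n → M e) (u : M e) : ¬ sgLT α u u :=
  fun h => h.2 rfl

lemma homology_nonzero (d : ℕ) (hd : 2 ≤ d) (hdo : d = 2 ∨ Odd d)
    (K : Type) [Field K] : ¬ HredVanishes K (bggen d) 0 (allOne d) 0 := by
  intro H
  have hd0 : 0 < d := by omega
  set α := bggen d with hα
  -- the two distinguished vertices
  set a₀ := bgen d ⟨0, hd0⟩ with ha₀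
  set b₀ := ggen d ⟨0, hd0⟩ with hb₀
  have hproper : ({⟨0, hd0⟩} : Finset (Fin d)) ≠ Finset.univ := by
    intro h
    have h1 : (⟨1, by omega⟩ : Fin d) ∈ ({⟨0, hd0⟩} : Finset (Fin d)) := by
      rw [h]; exact Finset.mem_univ _
    rw [Finset.mem_singleton, Fin.ext_iff] at h1
    simp at h1
  have ha₀A : a₀ ∈ setA d :=
    ⟨{⟨0, hd0⟩}, Finset.singleton_nonempty _, hproper, by rw [ha₀, Finset.sum_singleton]⟩
  have hb₀B : b₀ ∈ setB d :=
    ⟨{⟨0, hd0⟩}, Finset.singleton_nonempty _, hproper, by rw [hb₀, Finset.sum_singleton]⟩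
  have haI := setA_subset_interval d hd a₀ ha₀A
  have hbI := setB_subset_interval d hd b₀ hb₀B
  have hANB : ∀ μ : M (2*d), μ ∈ setA d → μ ∈ setB d → False := by
    intro μ h1 h2
    have : μ ∈ setA d ∩ setB d := ⟨h1, h2⟩
    rw [disjointAB d hd hdo] at this
    exact this
  have hab : a₀ ≠ b₀ := fun h => hANB a₀ ha₀A (h ▸ hb₀B)
  -- the two singleton faces
  have mkface : ∀ μ : M (2*d), μ ∈ sg α ∧ sgLT α 0 μ ∧ sgLT α μ (allOne d) →
      IsOFace α 0 (allOne d) {μ} := by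
    intro μ hμ
    refine ⟨fun ν hν => ?_, ?_⟩
    · rw [Finset.mem_singleton] at hν; rw [hν]; exact hμ
    · rw [Finset.coe_singleton]; exact Set.pairwise_singleton _ _
  set Sa : OFace α 0 (allOne d) 1 := ⟨{a₀}, mkface a₀ haI, Finset.card_singleton _⟩ with hSa
  set Sb : OFace α 0 (allOne d) 1 := ⟨{b₀}, mkface b₀ hbI, Finset.card_singleton _⟩ with hSb
  set c : OC K α 0 (allOne d) 1 := Finsupp.single Sa 1 - Finsupp.single Sb 1 with hc
  -- the weight functional
  set w : OFace α 0 (allOne d) 1 → K :=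
    fun S => if ∃ μ ∈ S.1, μ ∈ setA d then 1 else 0 with hw
  set ℓ : OC K α 0 (allOne d) 1 →ₗ[K] K := Finsupp.linearCombination K w with hℓ
  -- c is a cycle
  have hsub : Subsingleton (OFace α 0 (allOne d) 0) :=
    ⟨fun S T => Subtype.ext (by
      rw [Finset.card_eq_zero.mp S.2.2, Finset.card_eq_zero.mp T.2.2])⟩
  set E0 : OFace α 0 (allOne d) 0 :=
    ⟨∅, ⟨fun ν hν => absurd hν (Finset.notMem_empty ν), by simp⟩, by simp⟩ with hE0
  have hsingle : ∀ S : OFace α 0 (allOne d) 1,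
      obd K α 0 (allOne d) 1 (Finsupp.single S 1) = Finsupp.single E0 1 := by
    intro S
    rw [obd, Finsupp.linearCombination_single, one_smul]
    obtain ⟨μ, hμ⟩ := Finset.card_eq_one.mp S.2.2
    have hterm : ∀ v ∈ S.1.attach,
        ((-1 : K) ^ (S.1.filter fun w' => sgLT α w' v.1).card) •
          Finsupp.single (erasedOFace S v.1 v.2) 1 = Finsupp.single E0 (1:K) := by
      intro v _
      have hv1 : v.1 = μ := Finset.mem_singleton.mp (by rw [← hμ]; exact v.2)
      have hfilt : (S.1.filter fun w' => sgLT α w' v.1).card = 0 := by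
        rw [Finset.card_eq_zero, Finset.filter_eq_empty_iff]
        intro x hx
        have hx1 : x = μ := Finset.mem_singleton.mp (by rw [← hμ]; exact hx)
        rw [hx1, hv1]; exact sgLT_irrefl α μ
      rw [hfilt, pow_zero, one_smul]
      congr 1
      exact @Subsingleton.elim _ hsub _ _
    rw [Finset.sum_congr rfl hterm, Finset.sum_const, Finset.card_attach, S.2.2, one_smul]
  have hcycle : obd K α 0 (allOne d) 1 c = 0 := by
    rw [hc, map_sub, hsingle Sa, hsingle Sb, sub_self]
  -- ℓ kills boundaries
  have hkill : ∀ S : OFace α 0 (allOne d) 2,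
      ℓ (obd K α 0 (allOne d) 2 (Finsupp.single S 1)) = 0 := by
    intro S
    rw [obd, Finsupp.linearCombination_single, one_smul, map_sum]
    set F : M (2*d) → K := fun v' =>
      ((-1 : K) ^ (S.1.filter fun w' => sgLT α w' v').card) *
        (if ∃ μ ∈ S.1.erase v', μ ∈ setA d then 1 else 0) with hF
    have hterm : ∀ v ∈ S.1.attach,
        ℓ (((-1 : K) ^ (S.1.filter fun w' => sgLT α w' v.1).card) •
          Finsupp.single (erasedOFace S v.1 v.2) 1) = F v.1 := by
      intro v _
      rw [map_smul, hℓ, Finsupp.linearCombination_single, one_smul, hF]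
      rw [smul_eq_mul]
      rfl
    rw [Finset.sum_congr rfl hterm, Finset.sum_attach S.1 F]
    obtain ⟨u, v, huv, hS⟩ := Finset.card_eq_two.mp S.2.2
    have hu : u ∈ S.1 := by rw [hS]; simp
    have hv : v ∈ S.1 := by rw [hS]; simp
    have hiu := S.2.1.1 u hu
    have hiv := S.2.1.1 v hv
    have hcmp : cmp2 α u v := S.2.1.2 (by rw [Finset.mem_coe]; exact hu)
      (by rw [Finset.mem_coe]; exact hv) huv
    have huAB := interval_subset d hd hdo u hiu.1 hiu.2.1 hiu.2.2
    have hvAB := interval_subset d hd hdo v hiv.1 hiv.2.1 hiv.2.2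
    have hsame : (u ∈ setA d) ↔ (v ∈ setA d) := by
      constructor
      · intro huA
        rcases hvAB with hvA | hvB
        · exact hvA
        · exfalso
          have := incomparable d hd hdo u huA v hvB
          rcases hcmp with h | h
          · exact this.1 h
          · exact this.2 h
      · intro hvA
        rcases huAB with huA | huB
        · exact huA
        · exfalso
          have := incomparable d hd hdo v hvA u huB
          rcases hcmp with h | h
          · exact this.2 h
          · exact this.1 h
    have hone : sgLT α u v ∨ sgLT α v u := by
      rcases hcmp with h | h
      · exact Or.inl ⟨h, huv⟩
      · exact Or.inr ⟨h, huv.symm⟩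
    have hnotboth : ¬ (sgLT α u v ∧ sgLT α v u) := by
      rintro ⟨h1, h2⟩
      exact huv (sgLE_antisymm α h1.1 h2.1)
    have herase_u : ({u, v} : Finset (M (2*d))).erase u = {v} :=
      Finset.erase_insert (by simp [huv])
    have herase_v : ({u, v} : Finset (M (2*d))).erase v = {u} := by
      rw [Finset.erase_insert_of_ne huv, Finset.erase_singleton, LawfulSingleton.insert_empty_eq]
    have hmemA_v : (∃ μ ∈ ({v} : Finset (M (2*d))), μ ∈ setA d) ↔ v ∈ setA d := by simp
    have hmemA_u : (∃ μ ∈ ({u} : Finset (M (2*d))), μ ∈ setA d) ↔ u ∈ setA d := by simp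
    rw [hS, Finset.sum_pair huv]
    simp only [hF]
    rw [hS, herase_u, herase_v]
    rcases hone with hlt | hlt
    · have hnlt : ¬ sgLT α v u := fun h => hnotboth ⟨hlt, h⟩
      have hfu : ({u, v} : Finset (M (2*d))).filter (fun w' => sgLT α w' u) = ∅ := by
        rw [Finset.filter_insert, if_neg (sgLT_irrefl α u), Finset.filter_singleton,
          if_neg hnlt]
      have hfv : ({u, v} : Finset (M (2*d))).filter (fun w' => sgLT α w' v) = {u} := by
        rw [Finset.filter_insert, if_pos hlt, Finset.filter_singleton,
          if_neg (sgLT_irrefl α v), LawfulSingleton.insert_empty_eq]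
      rw [hfu, hfv, Finset.card_empty, Finset.card_singleton, pow_zero, pow_one, one_mul,
        neg_one_mul]
      by_cases hA : u ∈ setA d
      · rw [if_pos (hmemA_v.mpr (hsame.mp hA)), if_pos (hmemA_u.mpr hA)]; ring
      · rw [if_neg (fun h => hA (hsame.mpr (hmemA_v.mp h))),
          if_neg (fun h => hA (hmemA_u.mp h))]; ring
    · have hnlt : ¬ sgLT α u v := fun h => hnotboth ⟨h, hlt⟩
      have hfu : ({u, v} : Finset (M (2*d))).filter (fun w' => sgLT α w' u) = {v} := by
        rw [Finset.filter_insert, if_neg (sgLT_irrefl α u), Finset.filter_singleton,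
          if_pos hlt]
      have hfv : ({u, v} : Finset (M (2*d))).filter (fun w' => sgLT α w' v) = ∅ := by
        rw [Finset.filter_insert, if_neg hnlt, Finset.filter_singleton,
          if_neg (sgLT_irrefl α v)]
      rw [hfu, hfv, Finset.card_empty, Finset.card_singleton, pow_zero, pow_one, one_mul,
        neg_one_mul]
      by_cases hA : u ∈ setA d
      · rw [if_pos (hmemA_v.mpr (hsame.mp hA)), if_pos (hmemA_u.mpr hA)]; ring
      · rw [if_neg (fun h => hA (hsame.mpr (hmemA_v.mp h))),
          if_neg (fun h => hA (hmemA_u.mp h))]; ring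
  have hkill' : ∀ b : OC K α 0 (allOne d) 2, ℓ (obd K α 0 (allOne d) 2 b) = 0 := by
    intro b
    induction b using Finsupp.induction_linear with
    | zero => simp
    | add f g hf hg => rw [map_add, map_add, hf, hg, add_zero]
    | single S k =>
      have : Finsupp.single S k = k • Finsupp.single S (1:K) := by
        rw [Finsupp.smul_single, smul_eq_mul, mul_one]
      rw [this, map_smul, map_smul, hkill S, smul_zero]
  -- now derive the contradiction
  obtain ⟨b, hb⟩ := H 1 (by norm_num) c hcycle
  have hwa : w Sa = 1 := if_pos ⟨a₀, Finset.mem_singleton_self a₀, ha₀A⟩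
  have hwb : w Sb = 0 := by
    refine if_neg ?_
    rintro ⟨μ, hμ, hμA⟩
    have hμb : μ = b₀ := Finset.mem_singleton.mp hμ
    exact hANB μ hμA (hμb ▸ hb₀B)
  have h1 : ℓ c = 1 := by
    rw [hc, map_sub, hℓ, Finsupp.linearCombination_single, Finsupp.linearCombination_single,
      one_smul, one_smul]
    rw [show (Finsupp.linearCombination K w) = ℓ from rfl] at *
    rw [hwa, hwb, sub_zero]
  have h2 : ℓ c = 0 := by rw [← hb]; exact hkill' b
  rw [h1] at h2
  exact one_ne_zero h2

end ASG

open ASG in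
/-- For `d ≥ 2` with `d = 2` or `d` odd, consider the
submonoid `Λ ⊆ ℕ^(2d)` generated by the `β_i` and `γ_j`.  Then
`𝟙 = β_1 + ⋯ + β_d ∈ Λ` has `deg 𝟙 = d`, the open interval `(0,𝟙)` is
nonempty and is the disjoint union `A ⊔ B` with no element of `A` comparable
to any element of `B`; consequently `H̃_0(Δ(0,𝟙); K) ≠ 0` for every field `K`. -/
theorem disconnected_interval_example
    (d : ℕ) (hd : 2 ≤ d) (hdo : d = 2 ∨ Odd d) :
    allOne d = ∑ i : Fin d, bgen d i ∧
    allOne d ∈ sg (bggen d) ∧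
    deg (bggen d) (allOne d) = d ∧
    {μ : M (2 * d) | μ ∈ sg (bggen d) ∧ sgLT (bggen d) 0 μ ∧ sgLT (bggen d) μ (allOne d)}
      = setA d ∪ setB d ∧
    setA d ∩ setB d = ∅ ∧
    (setA d ∪ setB d).Nonempty ∧
    (∀ a ∈ setA d, ∀ b ∈ setB d,
      ¬ sgLE (bggen d) a b ∧ ¬ sgLE (bggen d) b a) ∧
    (∀ (K : Type) [Field K], ¬ HredVanishes K (bggen d) 0 (allOne d) 0) := by
  have hd0 : 0 < d := by omega
  have hproper : ({⟨0, hd0⟩} : Finset (Fin d)) ≠ Finset.univ := by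
    intro h
    have h1 : (⟨1, by omega⟩ : Fin d) ∈ ({⟨0, hd0⟩} : Finset (Fin d)) := by
      rw [h]; exact Finset.mem_univ _
    rw [Finset.mem_singleton, Fin.ext_iff] at h1
    simp at h1
  refine ⟨allOne_eq_sumB d hd0, allOne_mem d hd0, deg_allOne d hd0, ?_, disjointAB d hd hdo,
    ⟨bgen d ⟨0, hd0⟩, Or.inl ⟨{⟨0, hd0⟩}, Finset.singleton_nonempty _, hproper,
      by rw [Finset.sum_singleton]⟩⟩, incomparable d hd hdo, homology_nonzero d hd hdo⟩
  ext μ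
  simp only [Set.mem_setOf_eq]
  constructor
  · rintro ⟨h1, h2, h3⟩
    exact interval_subset d hd hdo μ h1 h2 h3
  · rintro (hA | hB)
    · exact setA_subset_interval d hd μ hA
    · exact setB_subset_interval d hd μ hB
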